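/- For the Lemniscate of Bernoulli f = (x²+y²)² - 2(x²-y²)z², the graded pieces of the Milnor algebra M(f) = ℂ[x,y,z]/(f_x, f_y, f_z) satisfy dim M(f)_k = 3 for all k ≥ 5, with dimensions 1, 3, 6, 7, 6 in degrees 0 through 4. -/

import Mathlib

set_option maxHeartbeats 1600000

open MvPolynomial

/-- The degree-`k` piece of the Milnor algebra `S/J_f`: the space of
homogeneous polynomials of degree `k` modulo those lying in the Jacobian ideal. -/
noncomputable abbrev milnorPiece (f : MvPolynomial (Fin 3) ℂ) (k : ℕ) :=
  homogeneousSubmodule (Fin 3) ℂ k ⧸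
    Submodule.comap (homogeneousSubmodule (Fin 3) ℂ k).subtype
      ((Ideal.span {pderiv 0 f, pderiv 1 f, pderiv 2 f}).restrictScalars ℂ)

noncomputable section LemniscateAux

namespace LemnAux

open Complex Module

abbrev MvP := MvPolynomial (Fin 3) ℂ

def F : MvP := (X 0 ^ 2 + X 1 ^ 2) ^ 2 - 2 * (X 0 ^ 2 - X 1 ^ 2) * X 2 ^ 2
def h1 : MvP := X 0 ^ 3 + X 0 * X 1 ^ 2 - X 0 * X 2 ^ 2
def h2 : MvP := X 0 ^ 2 * X 1 + X 1 ^ 3 + X 1 * X 2 ^ 2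
def h3 : MvP := X 1 ^ 2 * X 2 - X 0 ^ 2 * X 2
def J : Ideal MvP := Ideal.span {pderiv 0 F, pderiv 1 F, pderiv 2 F}

lemma J_eq : J = Ideal.span {pderiv 0 F, pderiv 1 F, pderiv 2 F} := rfl

lemma I_pow3 : (Complex.I)^3 = -Complex.I := by
  rw [pow_succ, Complex.I_sq]; ring
lemma I_pow4 : (Complex.I)^4 = 1 := by
  rw [show 4 = 2*2 from rfl, pow_mul, Complex.I_sq]; ring

lemma pderiv_two (i : Fin 3) : (pderiv i) (2 : MvP) = 0 := by
  rw [← map_ofNat (C : ℂ →+* MvP) 2]; simp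

lemma hpd0 : pderiv 0 F = 4 * h1 := by
  simp [F, h1, pderiv_mul, pderiv_pow, pderiv_two]; ring
lemma hpd1 : pderiv 1 F = 4 * h2 := by
  simp [F, h2, pderiv_mul, pderiv_pow, pderiv_two]; ring
lemma hpd2 : pderiv 2 F = 4 * h3 := by
  simp [F, h3, pderiv_mul, pderiv_pow, pderiv_two]; ring

lemma mem_span_triple {R : Type*} [CommRing R] {u v w p : R} :
    p ∈ Ideal.span {u, v, w} ↔ ∃ a b c, p = a * u + b * v + c * w := by
  constructor
  · intro hp
    rw [Ideal.mem_span_insert] at hp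
    obtain ⟨a, z, hz, rfl⟩ := hp
    rw [Ideal.mem_span_insert] at hz
    obtain ⟨b, z2, hz2, rfl⟩ := hz
    rw [Ideal.mem_span_singleton'] at hz2
    obtain ⟨c, rfl⟩ := hz2
    exact ⟨a, b, c, by ring⟩
  · rintro ⟨a, b, c, rfl⟩
    refine Ideal.add_mem _ (Ideal.add_mem _ ?_ ?_) ?_ <;>
      exact Ideal.mul_mem_left _ _ (Ideal.subset_span (by simp))

lemma memJ4 (p A B Cc : MvP) (h : 4 * p = A * h1 + B * h2 + Cc * h3) : p ∈ J := by
  have h4 : (C (1/4:ℂ) : MvP) * 4 = 1 := by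
    rw [← map_ofNat (C : ℂ →+* MvP) 4, ← C_mul]; norm_num
  rw [J_eq, mem_span_triple, hpd0, hpd1, hpd2]
  refine ⟨C (1/4) * (C (1/4) * A), C (1/4) * (C (1/4) * B), C (1/4) * (C (1/4) * Cc), ?_⟩
  linear_combination (4 * (C (1/4:ℂ) : MvP)^2) * h - p * (1 + 4 * (C (1/4:ℂ) : MvP)) * h4

lemma memJ4R (p A B Cc : MvP) (h : 4 * p = A * h1 + B * h2 + Cc * h3) :
    p ∈ J.restrictScalars ℂ := memJ4 p A B Cc h

lemma spanC {v : MvP} {s : Set MvP} (hv : v ∈ s) (α : ℂ) :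
    C α * v ∈ Submodule.span ℂ s := by
  rw [← smul_eq_C_mul]; exact Submodule.smul_mem _ _ (Submodule.subset_span hv)

lemma homo_mono (a b c : ℕ) :
    (X 0 ^ a * X 1 ^ b * X 2 ^ c : MvP) ∈ homogeneousSubmodule (Fin 3) ℂ (a + b + c) := by
  rw [mem_homogeneousSubmodule]
  have := (((isHomogeneous_X ℂ (0:Fin 3)).pow a).mul ((isHomogeneous_X ℂ (1:Fin 3)).pow b)).mul
    ((isHomogeneous_X ℂ (2:Fin 3)).pow c)
  simpa using this

lemma homo_of_eq {p : MvP} {a b c k : ℕ} (h : p = X 0 ^ a * X 1 ^ b * X 2 ^ c)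
    (hk : a + b + c = k) : p ∈ homogeneousSubmodule (Fin 3) ℂ k := by
  subst h; rw [← hk]; exact homo_mono a b c

lemma degree_sum (d : Fin 3 →₀ ℕ) : Finsupp.degree d = d 0 + d 1 + d 2 := by
  rw [Finsupp.degree_apply, Finset.sum_subset (Finset.subset_univ d.support)]
  · rw [Fin.sum_univ_three]
  · intro i _ h; simpa using h

lemma monomial_eq_prod (d : Fin 3 →₀ ℕ) :
    (monomial d (1:ℂ) : MvP) = X 0 ^ d 0 * X 1 ^ d 1 * X 2 ^ d 2 := by
  rw [← prod_X_pow_eq_monomial]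
  rw [show (d.support : Finset (Fin 3)) = Finset.univ.filter (fun i => d i ≠ 0) from ?_]
  · rw [Finset.prod_filter]
    rw [Fin.prod_univ_three]
    congr 1 <;> [skip; split] <;> [congr 1; rfl; simp_all] <;> split <;> simp_all
  · ext i; simp [Finsupp.mem_support_iff]

lemma span_monomials (W : Submodule ℂ MvP) (k : ℕ)
    (hW : ∀ a b c : ℕ, a + b + c = k → (X 0 ^ a * X 1 ^ b * X 2 ^ c : MvP) ∈ W)
    {h : MvP} (hh : h ∈ homogeneousSubmodule (Fin 3) ℂ k) : h ∈ W := by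
  rw [mem_homogeneousSubmodule] at hh
  rw [h.as_sum]
  apply Submodule.sum_mem
  intro d hd
  have hdeg : d 0 + d 1 + d 2 = k := by
    rw [← degree_sum, Finsupp.degree_eq_weight_one]
    exact hh (mem_support_iff.mp hd)
  have he : (monomial d (coeff d h) : MvP)
      = coeff d h • (X 0 ^ d 0 * X 1 ^ d 1 * X 2 ^ d 2) := by
    rw [← monomial_eq_prod, smul_monomial, smul_eq_mul, mul_one]
  rw [he]
  exact W.smul_mem _ (hW _ _ _ hdeg)

lemma homComp_mul (a g : MvP) {d : ℕ} (hg : g ∈ homogeneousSubmodule (Fin 3) ℂ d) (n : ℕ) :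
    homogeneousComponent n (a * g) =
      if d ≤ n then homogeneousComponent (n - d) a * g else 0 := by
  rw [mem_homogeneousSubmodule] at hg
  have key : ∀ j, homogeneousComponent n (homogeneousComponent j a * g) =
      if j + d = n then homogeneousComponent j a * g else 0 := by
    intro j
    have hmem : homogeneousComponent j a * g ∈ homogeneousSubmodule (Fin 3) ℂ (j + d) :=
      (mem_homogeneousSubmodule _ _).mpr ((homogeneousComponent_isHomogeneous j a).mul hg)
    rw [homogeneousComponent_of_mem hmem]
    by_cases hc : n = j + d
    · rw [if_pos hc, if_pos hc.symm]
    · rw [if_neg hc, if_neg (fun h => hc h.symm)]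
  nth_rewrite 1 [← sum_homogeneousComponent a]
  rw [Finset.sum_mul, map_sum]
  by_cases hdn : d ≤ n
  · rw [if_pos hdn]
    by_cases hT : n - d ≤ a.totalDegree
    · rw [Finset.sum_eq_single (n - d)]
      · rw [key, if_pos (by omega)]
      · intro j _ hne; rw [key, if_neg (by omega)]
      · intro habs; exact absurd (Finset.mem_range.mpr (by omega)) habs
    · have hz : homogeneousComponent (n - d) a = 0 :=
        homogeneousComponent_eq_zero _ a (by omega)
      rw [hz, zero_mul]
      apply Finset.sum_eq_zero
      intro j hj
      rw [key, if_neg (by simp at hj; omega)]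
  · rw [if_neg hdn]
    apply Finset.sum_eq_zero
    intro j hj
    rw [key, if_neg (by omega)]

lemma four_smul (p : MvP) : (4 : MvP) * p = (4:ℂ) • p := by
  rw [smul_eq_C_mul, map_ofNat]

lemma h1mem : h1 ∈ homogeneousSubmodule (Fin 3) ℂ 3 := by
  rw [show h1 = X 0^3*X 1^0*X 2^0 + X 0^1*X 1^2*X 2^0 - X 0^1*X 1^0*X 2^2 from by
    rw [h1]; ring]
  exact Submodule.sub_mem _ (Submodule.add_mem _ (homo_mono 3 0 0) (homo_mono 1 2 0))
    (homo_mono 1 0 2)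
lemma h2mem : h2 ∈ homogeneousSubmodule (Fin 3) ℂ 3 := by
  rw [show h2 = X 0^2*X 1^1*X 2^0 + X 0^0*X 1^3*X 2^0 + X 0^0*X 1^1*X 2^2 from by
    rw [h2]; ring]
  exact Submodule.add_mem _ (Submodule.add_mem _ (homo_mono 2 1 0) (homo_mono 0 3 0))
    (homo_mono 0 1 2)
lemma h3mem : h3 ∈ homogeneousSubmodule (Fin 3) ℂ 3 := by
  rw [show h3 = X 0^0*X 1^2*X 2^1 - X 0^2*X 1^0*X 2^1 from by rw [h3]; ring]
  exact Submodule.sub_mem _ (homo_mono 0 2 1) (homo_mono 2 0 1)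

lemma gmem0 : pderiv 0 F ∈ homogeneousSubmodule (Fin 3) ℂ 3 := by
  rw [hpd0, four_smul]; exact Submodule.smul_mem _ _ h1mem
lemma gmem1 : pderiv 1 F ∈ homogeneousSubmodule (Fin 3) ℂ 3 := by
  rw [hpd1, four_smul]; exact Submodule.smul_mem _ _ h2mem
lemma gmem2 : pderiv 2 F ∈ homogeneousSubmodule (Fin 3) ℂ 3 := by
  rw [hpd2, four_smul]; exact Submodule.smul_mem _ _ h3mem

/-- Homogeneous elements of `J` of degree `< 3` vanish. -/
lemma decomp_lt {k : ℕ} (hk : k < 3) {p : MvP} (hp : p ∈ J)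
    (hh : p ∈ homogeneousSubmodule (Fin 3) ℂ k) : p = 0 := by
  rw [J_eq, mem_span_triple] at hp
  obtain ⟨a, b, c, rfl⟩ := hp
  have h0 := homogeneousComponent_of_mem (m := k) hh
  rw [if_pos rfl] at h0
  rw [← h0, map_add, map_add,
    homComp_mul a _ gmem0 k, homComp_mul b _ gmem1 k, homComp_mul c _ gmem2 k,
    if_neg (by omega), if_neg (by omega), if_neg (by omega)]
  simp

/-- Kernel criterion for functionals on the degree-`k` part of `J`. -/
lemma kerφ {k t : ℕ} (hk : 3 ≤ k) (φ : MvP →ₗ[ℂ] (Fin t → ℂ))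
    (hc : ∀ a b c : ℕ, a + b + c = k - 3 →
      φ ((X 0 ^ a * X 1 ^ b * X 2 ^ c) * h1) = 0 ∧
      φ ((X 0 ^ a * X 1 ^ b * X 2 ^ c) * h2) = 0 ∧
      φ ((X 0 ^ a * X 1 ^ b * X 2 ^ c) * h3) = 0) :
    ∀ p ∈ J, p ∈ homogeneousSubmodule (Fin 3) ℂ k → φ p = 0 := by
  have main : ∀ (q : MvP) (hq : q ∈ homogeneousSubmodule (Fin 3) ℂ (k-3)) (g : MvP),
      (∀ a b c : ℕ, a + b + c = k - 3 → φ ((X 0 ^ a * X 1 ^ b * X 2 ^ c) * g) = 0) →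
      φ (q * g) = 0 := by
    intro q hq g hg
    have : q ∈ LinearMap.ker (φ.comp (LinearMap.mulRight ℂ g)) := by
      apply span_monomials _ _ _ hq
      intro a b c habc
      simpa using hg a b c habc
    simpa using this
  intro p hp hh
  rw [J_eq, mem_span_triple] at hp
  obtain ⟨a, b, c, rfl⟩ := hp
  have h0 := homogeneousComponent_of_mem (m := k) hh
  rw [if_pos rfl] at h0
  rw [← h0]
  rw [show (homogeneousComponent k) (a * pderiv 0 F + b * pderiv 1 F + c * pderiv 2 F)
      = (homogeneousComponent k) (a * pderiv 0 F) + (homogeneousComponent k) (b * pderiv 1 F)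
        + (homogeneousComponent k) (c * pderiv 2 F) from by rw [map_add, map_add],
    homComp_mul a _ gmem0 k, homComp_mul b _ gmem1 k, homComp_mul c _ gmem2 k,
    if_pos hk, if_pos hk, if_pos hk, hpd0, hpd1, hpd2]
  have e1 : homogeneousComponent (k-3) a * (4 * h1)
      = (4:ℂ) • (homogeneousComponent (k-3) a * h1) := by
    rw [← four_smul]; ring
  have e2 : homogeneousComponent (k-3) b * (4 * h2)
      = (4:ℂ) • (homogeneousComponent (k-3) b * h2) := by
    rw [← four_smul]; ring
  have e3 : homogeneousComponent (k-3) c * (4 * h3)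
      = (4:ℂ) • (homogeneousComponent (k-3) c * h3) := by
    rw [← four_smul]; ring
  rw [e1, e2, e3, map_add, map_add, map_smul, map_smul, map_smul]
  rw [main _ ((mem_homogeneousSubmodule _ _).mpr (homogeneousComponent_isHomogeneous _ a)) h1
      (fun a' b' c' h => (hc a' b' c' h).1),
    main _ ((mem_homogeneousSubmodule _ _).mpr (homogeneousComponent_isHomogeneous _ b)) h2
      (fun a' b' c' h => (hc a' b' c' h).2.1),
    main _ ((mem_homogeneousSubmodule _ _).mpr (homogeneousComponent_isHomogeneous _ c)) h3
      (fun a' b' c' h => (hc a' b' c' h).2.2)]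
  simp

-- evaluation functionals
def evalL (q : Fin 3 → ℂ) : MvP →ₗ[ℂ] ℂ := (aeval q).toLinearMap

def mkFun {t N : ℕ} (Cm : Matrix (Fin t) (Fin N) ℂ) (pts : Fin N → Fin 3 → ℂ) :
    MvP →ₗ[ℂ] (Fin t → ℂ) :=
  LinearMap.pi (fun i => ∑ j, Cm i j • evalL (pts j))

lemma mkFun_apply {t N : ℕ} (Cm : Matrix (Fin t) (Fin N) ℂ) (pts : Fin N → Fin 3 → ℂ)
    (p : MvP) (i : Fin t) : mkFun Cm pts p i = ∑ j, Cm i j * aeval (pts j) p := by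
  simp [mkFun, evalL]

@[simp] lemma cons_val_five6 {α : Type*} (x : α) (u : Fin 5 → α) :
    Matrix.vecCons x u (5:Fin 6) = u 4 := rfl
@[simp] lemma cons_val_five7 {α : Type*} (x : α) (u : Fin 6 → α) :
    Matrix.vecCons x u (5:Fin 7) = u 4 := rfl
@[simp] lemma cons_val_six7 {α : Type*} (x : α) (u : Fin 6 → α) :
    Matrix.vecCons x u (6:Fin 7) = u 5 := rfl

/-- The master finrank computation. -/
lemma finrank_eq_of_dual {k t : ℕ} (φ : MvP →ₗ[ℂ] (Fin t → ℂ)) (m : Fin t → MvP)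
    (hm : ∀ i, m i ∈ homogeneousSubmodule (Fin 3) ℂ k)
    (hker : ∀ p ∈ J, p ∈ homogeneousSubmodule (Fin 3) ℂ k → φ p = 0)
    (hdual : ∀ i, φ (m i) = fun j => if i = j then 1 else 0)
    (hspan : ∀ h ∈ homogeneousSubmodule (Fin 3) ℂ k,
      h ∈ (J.restrictScalars ℂ ⊔ Submodule.span ℂ (Set.range m))) :
    finrank ℂ (milnorPiece F k) = t := by
  set S := homogeneousSubmodule (Fin 3) ℂ k
  set N : Submodule ℂ S := Submodule.comap S.subtype (J.restrictScalars ℂ) with hN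
  set v : Fin t → (S ⧸ N) := fun i => Submodule.Quotient.mk ⟨m i, hm i⟩ with hv
  have hrange : ∀ z ∈ Submodule.span ℂ (Set.range m), z ∈ S ∧
      ∀ (hz : z ∈ S), (Submodule.Quotient.mk (⟨z, hz⟩ : S) : S ⧸ N) ∈
        Submodule.span ℂ (Set.range v) := by
    intro z hz
    induction hz using Submodule.span_induction with
    | mem x h =>
      obtain ⟨i, rfl⟩ := h
      exact ⟨hm i, fun hz => Submodule.subset_span ⟨i, rfl⟩⟩
    | zero =>
      refine ⟨S.zero_mem, fun hz => ?_⟩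
      rw [show (⟨0, hz⟩ : S) = 0 from rfl, Submodule.Quotient.mk_zero]
      exact Submodule.zero_mem _
    | add x y hx hy ihx ihy =>
      refine ⟨S.add_mem ihx.1 ihy.1, fun hz => ?_⟩
      rw [show (⟨x + y, hz⟩ : S) = ⟨x, ihx.1⟩ + ⟨y, ihy.1⟩ from rfl,
        Submodule.Quotient.mk_add]
      exact Submodule.add_mem _ (ihx.2 ihx.1) (ihy.2 ihy.1)
    | smul a x hx ihx =>
      refine ⟨S.smul_mem a ihx.1, fun hz => ?_⟩
      rw [show (⟨a • x, hz⟩ : S) = a • (⟨x, ihx.1⟩ : S) from rfl,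
        Submodule.Quotient.mk_smul]
      exact Submodule.smul_mem _ _ (ihx.2 ihx.1)
  have hvtop : Submodule.span ℂ (Set.range v) = ⊤ := by
    rw [eq_top_iff]
    rintro q -
    obtain ⟨⟨h, hh⟩, rfl⟩ := Submodule.Quotient.mk_surjective N q
    obtain ⟨y, hy, z, hz, hyz⟩ := Submodule.mem_sup.mp (hspan h hh)
    have hzS : z ∈ S := (hrange z hz).1
    have hyS : y ∈ S := by
      have hy' : y = h - z := by rw [← hyz]; ring
      rw [hy']; exact S.sub_mem hh hzS
    have heq : (Submodule.Quotient.mk (⟨h, hh⟩ : S) : S ⧸ N)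
        = Submodule.Quotient.mk (⟨z, hzS⟩ : S) := by
      rw [Submodule.Quotient.eq]
      refine (show ((⟨h, hh⟩ : S) - ⟨z, hzS⟩) = ⟨y, hyS⟩ from Subtype.ext (by
        simp only [Submodule.coe_sub]; rw [← hyz]; ring)) ▸ ?_
      exact hy
    rw [heq]
    exact (hrange z hz).2 hzS
  have hfin : Module.Finite ℂ (S ⧸ N) :=
    ⟨by rw [← hvtop]; exact Submodule.fg_span (Set.finite_range v)⟩
  have hub : finrank ℂ (S ⧸ N) ≤ t := by
    simpa using finrank_le_of_span_eq_top hvtop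
  have hle : N ≤ LinearMap.ker (φ.comp S.subtype) := by
    rintro ⟨p, hp⟩ hmem
    exact hker p hmem hp
  set φbar := Submodule.liftQ N (φ.comp S.subtype) hle with hφbar
  have hsurj : Function.Surjective φbar := by
    intro w
    have hmemS : (∑ i, w i • m i) ∈ S := S.sum_mem fun i _ => S.smul_mem _ (hm i)
    refine ⟨(Submodule.Quotient.mk ⟨∑ i, w i • m i, hmemS⟩ : S ⧸ N), ?_⟩
    rw [hφbar, Submodule.liftQ_apply]
    have hc : φ.comp S.subtype ⟨∑ i, w i • m i, hmemS⟩ = ∑ i, w i • φ (m i) := by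
      simp [map_sum]
    rw [hc]
    conv_rhs => rw [pi_eq_sum_univ w]
    refine Finset.sum_congr rfl fun i _ => by rw [hdual i]
  have hlb : t ≤ finrank ℂ (S ⧸ N) := by
    have hr : finrank ℂ (LinearMap.range φbar) ≤ finrank ℂ (S ⧸ N) :=
      LinearMap.finrank_range_le φbar
    rwa [LinearMap.range_eq_top.mpr hsurj, finrank_top, finrank_fin_fun] at hr
  exact le_antisymm hub hlb

-- dual basis monomials per degree
def mv0 : Fin 1 → MvP := ![1]
def mv1 : Fin 3 → MvP := ![X 0, X 1, X 2]
def mv2 : Fin 6 → MvP := ![X 2^2, X 1*X 2, X 1^2, X 0*X 2, X 0*X 1, X 0^2]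
def mv3 : Fin 7 → MvP := ![X 0*X 1*X 2, X 2^3, X 0^3, X 0*X 1^2, X 0^2*X 1, X 1^3, X 0^2*X 2]
def mv4 : Fin 6 → MvP := ![X 0^3*X 1, X 0^3*X 2, X 0^2*X 1*X 2, X 1^4, X 1^2*X 2^2, X 2^4]
def mvI (n : ℕ) : Fin 3 → MvP := ![X 2^(n+5), X 1^(n+5), X 0*X 1^(n+4)]

def pts0 : Fin 1 → Fin 3 → ℂ := ![![1,1,1]]
def C0 : Matrix (Fin 1) (Fin 1) ℂ := !![1]
def pts1 : Fin 3 → Fin 3 → ℂ := ![![1,0,0],![0,1,0],![0,0,1]]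
def C1 : Matrix (Fin 3) (Fin 3) ℂ := !![1,0,0; 0,1,0; 0,0,1]
def pts2 : Fin 6 → Fin 3 → ℂ := ![![1,0,0],![0,1,0],![0,0,1],![1,1,0],![1,0,1],![0,1,1]]
def C2 : Matrix (Fin 6) (Fin 6) ℂ := !![0, 0, 1, 0, 0, 0;
    0, -1, -1, 0, 0, 1;
    0, 1, 0, 0, 0, 0;
    -1, 0, -1, 0, 1, 0;
    -1, -1, 0, 1, 0, 0;
    1, 0, 0, 0, 0, 0]
def pts3 : Fin 10 → Fin 3 → ℂ := ![![1,0,0],![0,1,0],![0,0,1],![1,1,0],![1,0,1],![0,1,1],![1,1,1],![2,1,0],![1,0,2],![0,1,2]]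
def C3 : Matrix (Fin 7) (Fin 10) ℂ := !![1, 1, 1, -1, -1, -1, 1, 0, 0, 0;
    0, 0, 1, 0, 0, 0, 0, 0, 0, 0;
    3/2, 0, -3, 0, -1, 0, 0, 0, 1/2, 0;
    5/2, -3/2, -3, 2, -1, 0, 0, -1/2, 1/2, 0;
    -3, 0, 3, -1, 0, 1, 0, 1/2, 0, -1/2;
    0, 1/2, 3, 0, 0, 1, 0, 0, 0, -1/2;
    -3/2, -3/2, 4, 0, 2, 2, 0, 0, -1/2, -1/2]
def pts4 : Fin 15 → Fin 3 → ℂ := ![![1,0,0],![0,1,0],![0,0,1],![1,1,0],![1,0,1],![0,1,1],![1,1,1],![2,1,0],![1,0,2],![0,1,2],![1,1,-1],![1,-1,1],![-1,1,1],![1,2,0],![2,0,1]]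
def C4 : Matrix (Fin 6) (Fin 15) ℂ := !![-5/2, 5/2, 0, 0, 0, 0, 0, 1/6, 0, 0, 0, 0, 0, -1/6, 0;
    -1, 0, -7/2, 0, -2, 0, 1/4, 0, 1/3, 0, -1/4, 1/4, -1/4, 0, 1/6;
    -8, -5, 5/2, -5, -5, 1, 1/2, 1/2, 1/2, -1/2, 0, 0, 1/2, 1/2, 1/2;
    -5/2, -5/2, 0, -5, 0, 0, 0, 1/2, 0, 0, 0, 0, 0, 1/2, 0;
    -6, -8, -1, -10, 0, 0, 1/4, 1, 0, 0, 1/4, 1/4, 1/4, 1, 0;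
    0, 0, 1, 0, 0, 0, 0, 0, 0, 0, 0, 0, 0, 0, 0]
def ptsI : Fin 3 → Fin 3 → ℂ := ![![0,0,1],![I,1,0],![-I,1,0]]
def CI : Matrix (Fin 3) (Fin 3) ℂ := !![1,0,0; 0,1/2,1/2; 0,-I/2,I/2]

lemma hm0 : ∀ i, mv0 i ∈ homogeneousSubmodule (Fin 3) ℂ 0 := by
  intro i; fin_cases i
  exact homo_of_eq (a := 0) (b := 0) (c := 0) (by show (1:MvP) = _; ring) rfl
lemma hm1 : ∀ i, mv1 i ∈ homogeneousSubmodule (Fin 3) ℂ 1 := by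
  intro i; fin_cases i
  · exact homo_of_eq (a := 1) (b := 0) (c := 0) (by show (X 0:MvP) = _; ring) rfl
  · exact homo_of_eq (a := 0) (b := 1) (c := 0) (by show (X 1:MvP) = _; ring) rfl
  · exact homo_of_eq (a := 0) (b := 0) (c := 1) (by show (X 2:MvP) = _; ring) rfl
lemma hm2 : ∀ i, mv2 i ∈ homogeneousSubmodule (Fin 3) ℂ 2 := by
  intro i; fin_cases i
  · exact homo_of_eq (a := 0) (b := 0) (c := 2) (by show (X 2^2:MvP) = _; ring) rfl
  · exact homo_of_eq (a := 0) (b := 1) (c := 1) (by show (X 1*X 2:MvP) = _; ring) rfl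
  · exact homo_of_eq (a := 0) (b := 2) (c := 0) (by show (X 1^2:MvP) = _; ring) rfl
  · exact homo_of_eq (a := 1) (b := 0) (c := 1) (by show (X 0*X 2:MvP) = _; ring) rfl
  · exact homo_of_eq (a := 1) (b := 1) (c := 0) (by show (X 0*X 1:MvP) = _; ring) rfl
  · exact homo_of_eq (a := 2) (b := 0) (c := 0) (by show (X 0^2:MvP) = _; ring) rfl
lemma hm3 : ∀ i, mv3 i ∈ homogeneousSubmodule (Fin 3) ℂ 3 := by
  intro i; fin_cases i
  · exact homo_of_eq (a := 1) (b := 1) (c := 1) (by show (X 0*X 1*X 2:MvP) = _; ring) rfl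
  · exact homo_of_eq (a := 0) (b := 0) (c := 3) (by show (X 2^3:MvP) = _; ring) rfl
  · exact homo_of_eq (a := 3) (b := 0) (c := 0) (by show (X 0^3:MvP) = _; ring) rfl
  · exact homo_of_eq (a := 1) (b := 2) (c := 0) (by show (X 0*X 1^2:MvP) = _; ring) rfl
  · exact homo_of_eq (a := 2) (b := 1) (c := 0) (by show (X 0^2*X 1:MvP) = _; ring) rfl
  · exact homo_of_eq (a := 0) (b := 3) (c := 0) (by show (X 1^3:MvP) = _; ring) rfl
  · exact homo_of_eq (a := 2) (b := 0) (c := 1) (by show (X 0^2*X 2:MvP) = _; ring) rfl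
lemma hm4 : ∀ i, mv4 i ∈ homogeneousSubmodule (Fin 3) ℂ 4 := by
  intro i; fin_cases i
  · exact homo_of_eq (a := 3) (b := 1) (c := 0) (by show (X 0^3*X 1:MvP) = _; ring) rfl
  · exact homo_of_eq (a := 3) (b := 0) (c := 1) (by show (X 0^3*X 2:MvP) = _; ring) rfl
  · exact homo_of_eq (a := 2) (b := 1) (c := 1) (by show (X 0^2*X 1*X 2:MvP) = _; ring) rfl
  · exact homo_of_eq (a := 0) (b := 4) (c := 0) (by show (X 1^4:MvP) = _; ring) rfl
  · exact homo_of_eq (a := 0) (b := 2) (c := 2) (by show (X 1^2*X 2^2:MvP) = _; ring) rfl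
  · exact homo_of_eq (a := 0) (b := 0) (c := 4) (by show (X 2^4:MvP) = _; ring) rfl
lemma hmI (n : ℕ) : ∀ i, mvI n i ∈ homogeneousSubmodule (Fin 3) ℂ (n+5) := by
  intro i; fin_cases i
  · exact homo_of_eq (a := 0) (b := 0) (c := n+5) (by show (X 2^(n+5):MvP) = _; ring) (by omega)
  · exact homo_of_eq (a := 0) (b := n+5) (c := 0) (by show (X 1^(n+5):MvP) = _; ring) (by omega)
  · exact homo_of_eq (a := 1) (b := n+4) (c := 0) (by show (X 0*X 1^(n+4):MvP) = _; ring) (by omega)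

lemma dual0 : ∀ i, mkFun C0 pts0 (mv0 i) = fun j => if i = j then 1 else 0 := by
  intro i
  funext j
  rw [mkFun_apply]
  fin_cases i <;> fin_cases j <;>
    norm_num [Fin.sum_univ_succ, C0, pts0, mv0, Fin.ext_iff]
lemma dual1 : ∀ i, mkFun C1 pts1 (mv1 i) = fun j => if i = j then 1 else 0 := by
  intro i
  funext j
  rw [mkFun_apply]
  fin_cases i <;> fin_cases j <;>
    norm_num [Matrix.cons_val_two, Matrix.tail_cons, Matrix.head_cons, Fin.sum_univ_succ, C1, pts1, mv1, Fin.ext_iff]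
lemma dual2 : ∀ i, mkFun C2 pts2 (mv2 i) = fun j => if i = j then 1 else 0 := by
  intro i
  funext j
  rw [mkFun_apply]
  fin_cases i <;> fin_cases j <;>
    norm_num [Matrix.cons_val_two, Matrix.tail_cons, Matrix.head_cons, Fin.sum_univ_succ, C2, pts2, mv2, Fin.ext_iff]
lemma dual3 : ∀ i, mkFun C3 pts3 (mv3 i) = fun j => if i = j then 1 else 0 := by
  intro i
  funext j
  rw [mkFun_apply]
  fin_cases i <;> fin_cases j <;>
    norm_num [Matrix.cons_val_two, Matrix.tail_cons, Matrix.head_cons, Fin.sum_univ_succ, C3, pts3, mv3, Fin.ext_iff]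
lemma dual4 : ∀ i, mkFun C4 pts4 (mv4 i) = fun j => if i = j then 1 else 0 := by
  intro i
  funext j
  rw [mkFun_apply]
  fin_cases i <;> fin_cases j <;>
    norm_num [Matrix.cons_val_two, Matrix.tail_cons, Matrix.head_cons, Fin.sum_univ_succ, C4, pts4, mv4, Fin.ext_iff]
lemma dualI (n : ℕ) : ∀ i, mkFun CI ptsI (mvI n i) = fun j => if i = j then 1 else 0 := by
  have hz : ∀ m : ℕ, (0:ℂ) ^ (m+4) = 0 := fun m => zero_pow (by omega)
  intro i
  funext j
  rw [mkFun_apply]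
  fin_cases i <;> fin_cases j <;>
    simp [CI, ptsI, mvI, Fin.sum_univ_succ, hz, Fin.ext_iff, show n+5 = (n+1)+4 from rfl] <;>
    (try ring_nf) <;> (try simp [Complex.I_sq, I_pow3, I_pow4]) <;> (try norm_num) <;> (try ring)

lemma ker_low {k : ℕ} (hk : k < 3) {t N' : ℕ} (Cm : Matrix (Fin t) (Fin N') ℂ)
    (pts : Fin N' → Fin 3 → ℂ) :
    ∀ p ∈ J, p ∈ homogeneousSubmodule (Fin 3) ℂ k → mkFun Cm pts p = 0 := by
  intro p hp hh
  rw [decomp_lt hk hp hh]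
  simp

lemma ker3 : ∀ p ∈ J, p ∈ homogeneousSubmodule (Fin 3) ℂ 3 → mkFun C3 pts3 p = 0 := by
  apply kerφ (by norm_num)
  intro a b c habc
  obtain rfl : a = 0 := by omega
  obtain rfl : b = 0 := by omega
  obtain rfl : c = 0 := by omega
  refine ⟨?_, ?_, ?_⟩ <;>
  · funext i
    rw [mkFun_apply]
    fin_cases i <;> norm_num [Matrix.cons_val_two, Matrix.tail_cons, Matrix.head_cons, Fin.sum_univ_succ, C3, pts3, h1, h2, h3]

lemma ker4_check (q : MvP) (h : ∀ i, mkFun C4 pts4 (q * h1) i = 0 ∧ mkFun C4 pts4 (q * h2) i = 0 ∧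
    mkFun C4 pts4 (q * h3) i = 0) :
    mkFun C4 pts4 (q * h1) = 0 ∧ mkFun C4 pts4 (q * h2) = 0 ∧ mkFun C4 pts4 (q * h3) = 0 :=
  ⟨funext fun i => (h i).1, funext fun i => (h i).2.1, funext fun i => (h i).2.2⟩

lemma ker4 : ∀ p ∈ J, p ∈ homogeneousSubmodule (Fin 3) ℂ 4 → mkFun C4 pts4 p = 0 := by
  apply kerφ (by norm_num)
  intro a b c habc
  have ha : a ≤ 1 := by omega
  interval_cases a
  · have hb : b ≤ 1 := by omega
    interval_cases b
    · obtain rfl : c = 1 := by omega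
      apply ker4_check
      intro i
      refine ⟨?_, ?_, ?_⟩ <;>
        (rw [mkFun_apply]; fin_cases i <;> norm_num [Matrix.cons_val_two, Matrix.tail_cons, Matrix.head_cons, Fin.sum_univ_succ, C4, pts4, h1, h2, h3])
    · obtain rfl : c = 0 := by omega
      apply ker4_check
      intro i
      refine ⟨?_, ?_, ?_⟩ <;>
        (rw [mkFun_apply]; fin_cases i <;> norm_num [Matrix.cons_val_two, Matrix.tail_cons, Matrix.head_cons, Fin.sum_univ_succ, C4, pts4, h1, h2, h3])
  · have hb : b ≤ 0 := by omega
    interval_cases b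
    obtain rfl : c = 0 := by omega
    apply ker4_check
    intro i
    refine ⟨?_, ?_, ?_⟩ <;>
      (rw [mkFun_apply]; fin_cases i <;> norm_num [Matrix.cons_val_two, Matrix.tail_cons, Matrix.head_cons, Fin.sum_univ_succ, C4, pts4, h1, h2, h3])

lemma kerI : ∀ p ∈ J, mkFun CI ptsI p = 0 := by
  have hgen : ∀ j : Fin 3, aeval (ptsI j) (pderiv 0 F) = 0 ∧ aeval (ptsI j) (pderiv 1 F) = 0 ∧
      aeval (ptsI j) (pderiv 2 F) = 0 := by
    intro j
    rw [hpd0, hpd1, hpd2]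
    refine ⟨?_, ?_, ?_⟩ <;>
      fin_cases j <;>
      simp [h1, h2, h3, ptsI] <;>
      (try ring_nf) <;> (try simp [Complex.I_sq, I_pow3, I_pow4]) <;> (try norm_num) <;> (try ring)
  have hpt : ∀ j : Fin 3, ∀ p ∈ J, aeval (ptsI j) p = 0 := by
    intro j p hp
    rw [J_eq, mem_span_triple] at hp
    obtain ⟨a, b, c, rfl⟩ := hp
    rw [map_add, map_add, map_mul, map_mul, map_mul, (hgen j).1, (hgen j).2.1, (hgen j).2.2]
    simp
  intro p hp
  funext i
  rw [mkFun_apply]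
  have hz : ∀ j, (aeval (ptsI j)) p = 0 := fun j => hpt j p hp
  simp [hz]

lemma hspan0 : ∀ a b c : ℕ, a + b + c = 0 →
    (X 0^a*X 1^b*X 2^c : MvP) ∈ (J.restrictScalars ℂ ⊔ Submodule.span ℂ (Set.range mv0)) := by
  intro a b c habc
  have ha : a ≤ 0 := by omega
  interval_cases a
  · have hb : b ≤ 0 := by omega
    interval_cases b
    · obtain rfl : c = 0 := by omega
      exact Submodule.mem_sup.mpr ⟨0, Submodule.zero_mem _, _,
        Submodule.subset_span ⟨0, rfl⟩, by
          show (0:MvP) + 1 = X 0^0*X 1^0*X 2^0; ring⟩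

lemma hspan1 : ∀ a b c : ℕ, a + b + c = 1 →
    (X 0^a*X 1^b*X 2^c : MvP) ∈ (J.restrictScalars ℂ ⊔ Submodule.span ℂ (Set.range mv1)) := by
  intro a b c habc
  have ha : a ≤ 1 := by omega
  interval_cases a
  · have hb : b ≤ 1 := by omega
    interval_cases b
    · obtain rfl : c = 1 := by omega
      exact Submodule.mem_sup.mpr ⟨0, Submodule.zero_mem _, _,
        Submodule.subset_span ⟨2, rfl⟩, by
          show (0:MvP) + X 2 = X 0^0*X 1^0*X 2^1; ring⟩
    · obtain rfl : c = 0 := by omega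
      exact Submodule.mem_sup.mpr ⟨0, Submodule.zero_mem _, _,
        Submodule.subset_span ⟨1, rfl⟩, by
          show (0:MvP) + X 1 = X 0^0*X 1^1*X 2^0; ring⟩
  · have hb : b ≤ 0 := by omega
    interval_cases b
    · obtain rfl : c = 0 := by omega
      exact Submodule.mem_sup.mpr ⟨0, Submodule.zero_mem _, _,
        Submodule.subset_span ⟨0, rfl⟩, by
          show (0:MvP) + X 0 = X 0^1*X 1^0*X 2^0; ring⟩

lemma hspan2 : ∀ a b c : ℕ, a + b + c = 2 →
    (X 0^a*X 1^b*X 2^c : MvP) ∈ (J.restrictScalars ℂ ⊔ Submodule.span ℂ (Set.range mv2)) := by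
  intro a b c habc
  have ha : a ≤ 2 := by omega
  interval_cases a
  · have hb : b ≤ 2 := by omega
    interval_cases b
    · obtain rfl : c = 2 := by omega
      exact Submodule.mem_sup.mpr ⟨0, Submodule.zero_mem _, _,
        Submodule.subset_span ⟨0, rfl⟩, by
          show (0:MvP) + X 2^2 = X 0^0*X 1^0*X 2^2; ring⟩
    · obtain rfl : c = 1 := by omega
      exact Submodule.mem_sup.mpr ⟨0, Submodule.zero_mem _, _,
        Submodule.subset_span ⟨1, rfl⟩, by
          show (0:MvP) + X 1*X 2 = X 0^0*X 1^1*X 2^1; ring⟩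
    · obtain rfl : c = 0 := by omega
      exact Submodule.mem_sup.mpr ⟨0, Submodule.zero_mem _, _,
        Submodule.subset_span ⟨2, rfl⟩, by
          show (0:MvP) + X 1^2 = X 0^0*X 1^2*X 2^0; ring⟩
  · have hb : b ≤ 1 := by omega
    interval_cases b
    · obtain rfl : c = 1 := by omega
      exact Submodule.mem_sup.mpr ⟨0, Submodule.zero_mem _, _,
        Submodule.subset_span ⟨3, rfl⟩, by
          show (0:MvP) + X 0*X 2 = X 0^1*X 1^0*X 2^1; ring⟩
    · obtain rfl : c = 0 := by omega
      exact Submodule.mem_sup.mpr ⟨0, Submodule.zero_mem _, _,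
        Submodule.subset_span ⟨4, rfl⟩, by
          show (0:MvP) + X 0*X 1 = X 0^1*X 1^1*X 2^0; ring⟩
  · have hb : b ≤ 0 := by omega
    interval_cases b
    · obtain rfl : c = 0 := by omega
      exact Submodule.mem_sup.mpr ⟨0, Submodule.zero_mem _, _,
        Submodule.subset_span ⟨5, rfl⟩, by
          show (0:MvP) + X 0^2 = X 0^2*X 1^0*X 2^0; ring⟩

lemma hspan3 : ∀ a b c : ℕ, a + b + c = 3 →
    (X 0^a*X 1^b*X 2^c : MvP) ∈ (J.restrictScalars ℂ ⊔ Submodule.span ℂ (Set.range mv3)) := by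
  intro a b c habc
  have ha : a ≤ 3 := by omega
  interval_cases a
  · have hb : b ≤ 3 := by omega
    interval_cases b
    · obtain rfl : c = 3 := by omega
      exact Submodule.mem_sup.mpr ⟨0, Submodule.zero_mem _, _,
        Submodule.subset_span ⟨1, rfl⟩, by
          show (0:MvP) + X 2^3 = X 0^0*X 1^0*X 2^3; ring⟩
    · obtain rfl : c = 2 := by omega
      refine Submodule.mem_sup.mpr ⟨X 0^0*X 1^1*X 2^2 - (C (-1:ℂ) * (X 0^2*X 1) + C (-1:ℂ) * (X 1^3)), memJ4R _
        (0) ((4)*1) (0)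
        (by simp only [h1, h2, h3, map_neg, map_one, map_ofNat]; ring),
        C (-1:ℂ) * (X 0^2*X 1) + C (-1:ℂ) * (X 1^3), ?_, by ring⟩
      exact Submodule.add_mem _ (spanC (⟨4, rfl⟩ : (X 0^2*X 1 : MvP) ∈ Set.range _) (-1:ℂ)) (spanC (⟨5, rfl⟩ : (X 1^3 : MvP) ∈ Set.range _) (-1:ℂ))
    · obtain rfl : c = 1 := by omega
      refine Submodule.mem_sup.mpr ⟨X 0^0*X 1^2*X 2^1 - (C (1:ℂ) * (X 0^2*X 2)), memJ4R _
        (0) (0) ((4)*1)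
        (by simp only [h1, h2, h3, map_neg, map_one, map_ofNat]; ring),
        C (1:ℂ) * (X 0^2*X 2), ?_, by ring⟩
      exact spanC (⟨6, rfl⟩ : (X 0^2*X 2 : MvP) ∈ Set.range _) (1:ℂ)
    · obtain rfl : c = 0 := by omega
      exact Submodule.mem_sup.mpr ⟨0, Submodule.zero_mem _, _,
        Submodule.subset_span ⟨5, rfl⟩, by
          show (0:MvP) + X 1^3 = X 0^0*X 1^3*X 2^0; ring⟩
  · have hb : b ≤ 2 := by omega
    interval_cases b
    · obtain rfl : c = 2 := by omega
      refine Submodule.mem_sup.mpr ⟨X 0^1*X 1^0*X 2^2 - (C (1:ℂ) * (X 0^3) + C (1:ℂ) * (X 0*X 1^2)), memJ4R _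
        ((-4)*1) (0) (0)
        (by simp only [h1, h2, h3, map_neg, map_one, map_ofNat]; ring),
        C (1:ℂ) * (X 0^3) + C (1:ℂ) * (X 0*X 1^2), ?_, by ring⟩
      exact Submodule.add_mem _ (spanC (⟨2, rfl⟩ : (X 0^3 : MvP) ∈ Set.range _) (1:ℂ)) (spanC (⟨3, rfl⟩ : (X 0*X 1^2 : MvP) ∈ Set.range _) (1:ℂ))
    · obtain rfl : c = 1 := by omega
      exact Submodule.mem_sup.mpr ⟨0, Submodule.zero_mem _, _,
        Submodule.subset_span ⟨0, rfl⟩, by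
          show (0:MvP) + X 0*X 1*X 2 = X 0^1*X 1^1*X 2^1; ring⟩
    · obtain rfl : c = 0 := by omega
      exact Submodule.mem_sup.mpr ⟨0, Submodule.zero_mem _, _,
        Submodule.subset_span ⟨3, rfl⟩, by
          show (0:MvP) + X 0*X 1^2 = X 0^1*X 1^2*X 2^0; ring⟩
  · have hb : b ≤ 1 := by omega
    interval_cases b
    · obtain rfl : c = 1 := by omega
      exact Submodule.mem_sup.mpr ⟨0, Submodule.zero_mem _, _,
        Submodule.subset_span ⟨6, rfl⟩, by
          show (0:MvP) + X 0^2*X 2 = X 0^2*X 1^0*X 2^1; ring⟩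
    · obtain rfl : c = 0 := by omega
      exact Submodule.mem_sup.mpr ⟨0, Submodule.zero_mem _, _,
        Submodule.subset_span ⟨4, rfl⟩, by
          show (0:MvP) + X 0^2*X 1 = X 0^2*X 1^1*X 2^0; ring⟩
  · have hb : b ≤ 0 := by omega
    interval_cases b
    · obtain rfl : c = 0 := by omega
      exact Submodule.mem_sup.mpr ⟨0, Submodule.zero_mem _, _,
        Submodule.subset_span ⟨2, rfl⟩, by
          show (0:MvP) + X 0^3 = X 0^3*X 1^0*X 2^0; ring⟩

lemma hspan4 : ∀ a b c : ℕ, a + b + c = 4 →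
    (X 0^a*X 1^b*X 2^c : MvP) ∈ (J.restrictScalars ℂ ⊔ Submodule.span ℂ (Set.range mv4)) := by
  intro a b c habc
  have ha : a ≤ 4 := by omega
  interval_cases a
  · have hb : b ≤ 4 := by omega
    interval_cases b
    · obtain rfl : c = 4 := by omega
      exact Submodule.mem_sup.mpr ⟨0, Submodule.zero_mem _, _,
        Submodule.subset_span ⟨5, rfl⟩, by
          show (0:MvP) + X 2^4 = X 0^0*X 1^0*X 2^4; ring⟩
    · obtain rfl : c = 3 := by omega
      refine Submodule.mem_sup.mpr ⟨X 0^0*X 1^1*X 2^3 - (C (-2:ℂ) * (X 0^2*X 1*X 2)), memJ4R _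
        (0) ((4)*X 2) ((-4)*X 1)
        (by simp only [h1, h2, h3, map_neg, map_one, map_ofNat]; ring),
        C (-2:ℂ) * (X 0^2*X 1*X 2), ?_, by ring⟩
      exact spanC (⟨2, rfl⟩ : (X 0^2*X 1*X 2 : MvP) ∈ Set.range _) (-2:ℂ)
    · obtain rfl : c = 2 := by omega
      exact Submodule.mem_sup.mpr ⟨0, Submodule.zero_mem _, _,
        Submodule.subset_span ⟨4, rfl⟩, by
          show (0:MvP) + X 1^2*X 2^2 = X 0^0*X 1^2*X 2^2; ring⟩
    · obtain rfl : c = 1 := by omega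
      refine Submodule.mem_sup.mpr ⟨X 0^0*X 1^3*X 2^1 - (C (1:ℂ) * (X 0^2*X 1*X 2)), memJ4R _
        (0) (0) ((4)*X 1)
        (by simp only [h1, h2, h3, map_neg, map_one, map_ofNat]; ring),
        C (1:ℂ) * (X 0^2*X 1*X 2), ?_, by ring⟩
      exact spanC (⟨2, rfl⟩ : (X 0^2*X 1*X 2 : MvP) ∈ Set.range _) (1:ℂ)
    · obtain rfl : c = 0 := by omega
      exact Submodule.mem_sup.mpr ⟨0, Submodule.zero_mem _, _,
        Submodule.subset_span ⟨3, rfl⟩, by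
          show (0:MvP) + X 1^4 = X 0^0*X 1^4*X 2^0; ring⟩
  · have hb : b ≤ 3 := by omega
    interval_cases b
    · obtain rfl : c = 3 := by omega
      refine Submodule.mem_sup.mpr ⟨X 0^1*X 1^0*X 2^3 - (C (2:ℂ) * (X 0^3*X 2)), memJ4R _
        ((-4)*X 2) (0) ((4)*X 0)
        (by simp only [h1, h2, h3, map_neg, map_one, map_ofNat]; ring),
        C (2:ℂ) * (X 0^3*X 2), ?_, by ring⟩
      exact spanC (⟨1, rfl⟩ : (X 0^3*X 2 : MvP) ∈ Set.range _) (2:ℂ)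
    · obtain rfl : c = 2 := by omega
      exact Submodule.mem_sup.mpr ⟨_, memJ4R (X 0^1*X 1^1*X 2^2)
        ((-2)*X 1) ((2)*X 0) (0)
        (by simp only [h1, h2, h3]; ring), 0, Submodule.zero_mem _, by ring⟩
    · obtain rfl : c = 1 := by omega
      refine Submodule.mem_sup.mpr ⟨X 0^1*X 1^2*X 2^1 - (C (1:ℂ) * (X 0^3*X 2)), memJ4R _
        (0) (0) ((4)*X 0)
        (by simp only [h1, h2, h3, map_neg, map_one, map_ofNat]; ring),
        C (1:ℂ) * (X 0^3*X 2), ?_, by ring⟩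
      exact spanC (⟨1, rfl⟩ : (X 0^3*X 2 : MvP) ∈ Set.range _) (1:ℂ)
    · obtain rfl : c = 0 := by omega
      refine Submodule.mem_sup.mpr ⟨X 0^1*X 1^3*X 2^0 - (C (-1:ℂ) * (X 0^3*X 1)), memJ4R _
        ((2)*X 1) ((2)*X 0) (0)
        (by simp only [h1, h2, h3, map_neg, map_one, map_ofNat]; ring),
        C (-1:ℂ) * (X 0^3*X 1), ?_, by ring⟩
      exact spanC (⟨0, rfl⟩ : (X 0^3*X 1 : MvP) ∈ Set.range _) (-1:ℂ)
  · have hb : b ≤ 2 := by omega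
    interval_cases b
    · obtain rfl : c = 2 := by omega
      refine Submodule.mem_sup.mpr ⟨X 0^2*X 1^0*X 2^2 - (C (1:ℂ) * (X 1^2*X 2^2)), memJ4R _
        (0) (0) ((-4)*X 2)
        (by simp only [h1, h2, h3, map_neg, map_one, map_ofNat]; ring),
        C (1:ℂ) * (X 1^2*X 2^2), ?_, by ring⟩
      exact spanC (⟨4, rfl⟩ : (X 1^2*X 2^2 : MvP) ∈ Set.range _) (1:ℂ)
    · obtain rfl : c = 1 := by omega
      exact Submodule.mem_sup.mpr ⟨0, Submodule.zero_mem _, _,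
        Submodule.subset_span ⟨2, rfl⟩, by
          show (0:MvP) + X 0^2*X 1*X 2 = X 0^2*X 1^1*X 2^1; ring⟩
    · obtain rfl : c = 0 := by omega
      refine Submodule.mem_sup.mpr ⟨X 0^2*X 1^2*X 2^0 - (C (-1:ℂ) * (X 1^4) + C (-1:ℂ) * (X 1^2*X 2^2)), memJ4R _
        (0) ((4)*X 1) (0)
        (by simp only [h1, h2, h3, map_neg, map_one, map_ofNat]; ring),
        C (-1:ℂ) * (X 1^4) + C (-1:ℂ) * (X 1^2*X 2^2), ?_, by ring⟩
      exact Submodule.add_mem _ (spanC (⟨3, rfl⟩ : (X 1^4 : MvP) ∈ Set.range _) (-1:ℂ)) (spanC (⟨4, rfl⟩ : (X 1^2*X 2^2 : MvP) ∈ Set.range _) (-1:ℂ))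
  · have hb : b ≤ 1 := by omega
    interval_cases b
    · obtain rfl : c = 1 := by omega
      exact Submodule.mem_sup.mpr ⟨0, Submodule.zero_mem _, _,
        Submodule.subset_span ⟨1, rfl⟩, by
          show (0:MvP) + X 0^3*X 2 = X 0^3*X 1^0*X 2^1; ring⟩
    · obtain rfl : c = 0 := by omega
      exact Submodule.mem_sup.mpr ⟨0, Submodule.zero_mem _, _,
        Submodule.subset_span ⟨0, rfl⟩, by
          show (0:MvP) + X 0^3*X 1 = X 0^3*X 1^1*X 2^0; ring⟩
  · have hb : b ≤ 0 := by omega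
    interval_cases b
    · obtain rfl : c = 0 := by omega
      refine Submodule.mem_sup.mpr ⟨X 0^4*X 1^0*X 2^0 - (C (1:ℂ) * (X 1^4) + C (2:ℂ) * (X 1^2*X 2^2)), memJ4R _
        ((4)*X 0) ((-4)*X 1) ((-4)*X 2)
        (by simp only [h1, h2, h3, map_neg, map_one, map_ofNat]; ring),
        C (1:ℂ) * (X 1^4) + C (2:ℂ) * (X 1^2*X 2^2), ?_, by ring⟩
      exact Submodule.add_mem _ (spanC (⟨3, rfl⟩ : (X 1^4 : MvP) ∈ Set.range _) (1:ℂ)) (spanC (⟨4, rfl⟩ : (X 1^2*X 2^2 : MvP) ∈ Set.range _) (2:ℂ))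

lemma hspan5 : ∀ a b c : ℕ, a + b + c = 5 →
    (X 0^a*X 1^b*X 2^c : MvP) ∈ (J.restrictScalars ℂ ⊔ Submodule.span ℂ (Set.range (mvI 0))) := by
  intro a b c habc
  have ha : a ≤ 5 := by omega
  interval_cases a
  · have hb : b ≤ 5 := by omega
    interval_cases b
    · obtain rfl : c = 5 := by omega
      exact Submodule.mem_sup.mpr ⟨0, Submodule.zero_mem _, _,
        Submodule.subset_span ⟨0, rfl⟩, by
          show (0:MvP) + X 2^(0+5) = X 0^0*X 1^0*X 2^5; ring⟩
    · obtain rfl : c = 4 := by omega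
      exact Submodule.mem_sup.mpr ⟨_, memJ4R (X 0^0*X 1^1*X 2^4)
        ((4)*X 0*X 1) ((4)*X 2^2 + (-4)*X 0^2) ((-4)*X 1*X 2)
        (by simp only [h1, h2, h3]; ring), 0, Submodule.zero_mem _, by ring⟩
    · obtain rfl : c = 3 := by omega
      exact Submodule.mem_sup.mpr ⟨_, memJ4R (X 0^0*X 1^2*X 2^3)
        ((-2)*X 0*X 2) ((2)*X 1*X 2) ((2)*X 2^2 + (-2)*X 1^2 + (-2)*X 0^2)
        (by simp only [h1, h2, h3]; ring), 0, Submodule.zero_mem _, by ring⟩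
    · obtain rfl : c = 2 := by omega
      exact Submodule.mem_sup.mpr ⟨_, memJ4R (X 0^0*X 1^3*X 2^2)
        ((-2)*X 0*X 1) ((2)*X 0^2) ((4)*X 1*X 2)
        (by simp only [h1, h2, h3]; ring), 0, Submodule.zero_mem _, by ring⟩
    · obtain rfl : c = 1 := by omega
      exact Submodule.mem_sup.mpr ⟨_, memJ4R (X 0^0*X 1^4*X 2^1)
        (X 0*X 2) (X 1*X 2) (-X 2^2 + (3)*X 1^2 + X 0^2)
        (by simp only [h1, h2, h3]; ring), 0, Submodule.zero_mem _, by ring⟩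
    · obtain rfl : c = 0 := by omega
      exact Submodule.mem_sup.mpr ⟨0, Submodule.zero_mem _, _,
        Submodule.subset_span ⟨1, rfl⟩, by
          show (0:MvP) + X 1^(0+5) = X 0^0*X 1^5*X 2^0; ring⟩
  · have hb : b ≤ 4 := by omega
    interval_cases b
    · obtain rfl : c = 4 := by omega
      exact Submodule.mem_sup.mpr ⟨_, memJ4R (X 0^1*X 1^0*X 2^4)
        ((-4)*X 2^2 + (-4)*X 1^2) ((4)*X 0*X 1) ((-4)*X 0*X 2)
        (by simp only [h1, h2, h3]; ring), 0, Submodule.zero_mem _, by ring⟩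
    · obtain rfl : c = 3 := by omega
      exact Submodule.mem_sup.mpr ⟨_, memJ4R (X 0^1*X 1^1*X 2^3)
        ((-2)*X 1*X 2) ((2)*X 0*X 2) (0)
        (by simp only [h1, h2, h3]; ring), 0, Submodule.zero_mem _, by ring⟩
    · obtain rfl : c = 2 := by omega
      exact Submodule.mem_sup.mpr ⟨_, memJ4R (X 0^1*X 1^2*X 2^2)
        ((-2)*X 1^2) ((2)*X 0*X 1) (0)
        (by simp only [h1, h2, h3]; ring), 0, Submodule.zero_mem _, by ring⟩
    · obtain rfl : c = 1 := by omega
      exact Submodule.mem_sup.mpr ⟨_, memJ4R (X 0^1*X 1^3*X 2^1)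
        (X 1*X 2) (X 0*X 2) ((2)*X 0*X 1)
        (by simp only [h1, h2, h3]; ring), 0, Submodule.zero_mem _, by ring⟩
    · obtain rfl : c = 0 := by omega
      exact Submodule.mem_sup.mpr ⟨0, Submodule.zero_mem _, _,
        Submodule.subset_span ⟨2, rfl⟩, by
          show (0:MvP) + X 0*X 1^(0+4) = X 0^1*X 1^4*X 2^0; ring⟩
  · have hb : b ≤ 3 := by omega
    interval_cases b
    · obtain rfl : c = 3 := by omega
      exact Submodule.mem_sup.mpr ⟨_, memJ4R (X 0^2*X 1^0*X 2^3)
        ((-2)*X 0*X 2) ((2)*X 1*X 2) ((-2)*X 2^2 + (-2)*X 1^2 + (-2)*X 0^2)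
        (by simp only [h1, h2, h3]; ring), 0, Submodule.zero_mem _, by ring⟩
    · obtain rfl : c = 2 := by omega
      exact Submodule.mem_sup.mpr ⟨_, memJ4R (X 0^2*X 1^1*X 2^2)
        ((-2)*X 0*X 1) ((2)*X 0^2) (0)
        (by simp only [h1, h2, h3]; ring), 0, Submodule.zero_mem _, by ring⟩
    · obtain rfl : c = 1 := by omega
      exact Submodule.mem_sup.mpr ⟨_, memJ4R (X 0^2*X 1^2*X 2^1)
        (X 0*X 2) (X 1*X 2) (-X 2^2 - X 1^2 + X 0^2)
        (by simp only [h1, h2, h3]; ring), 0, Submodule.zero_mem _, by ring⟩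
    · obtain rfl : c = 0 := by omega
      refine Submodule.mem_sup.mpr ⟨X 0^2*X 1^3*X 2^0 - (C (-1:ℂ) * (X 1^(0+5))), memJ4R _
        ((2)*X 0*X 1) ((4)*X 1^2 + (-2)*X 0^2) ((-4)*X 1*X 2)
        (by simp only [h1, h2, h3, map_neg, map_one, map_ofNat]; ring),
        C (-1:ℂ) * (X 1^(0+5)), ?_, by ring⟩
      exact spanC (⟨1, rfl⟩ : (X 1^(0+5) : MvP) ∈ Set.range _) (-1:ℂ)
  · have hb : b ≤ 2 := by omega
    interval_cases b
    · obtain rfl : c = 2 := by omega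
      exact Submodule.mem_sup.mpr ⟨_, memJ4R (X 0^3*X 1^0*X 2^2)
        ((-2)*X 1^2) ((2)*X 0*X 1) ((-4)*X 0*X 2)
        (by simp only [h1, h2, h3]; ring), 0, Submodule.zero_mem _, by ring⟩
    · obtain rfl : c = 1 := by omega
      exact Submodule.mem_sup.mpr ⟨_, memJ4R (X 0^3*X 1^1*X 2^1)
        (X 1*X 2) (X 0*X 2) ((-2)*X 0*X 1)
        (by simp only [h1, h2, h3]; ring), 0, Submodule.zero_mem _, by ring⟩
    · obtain rfl : c = 0 := by omega
      refine Submodule.mem_sup.mpr ⟨X 0^3*X 1^2*X 2^0 - (C (-1:ℂ) * (X 0*X 1^(0+4))), memJ4R _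
        ((2)*X 1^2) ((2)*X 0*X 1) (0)
        (by simp only [h1, h2, h3, map_neg, map_one, map_ofNat]; ring),
        C (-1:ℂ) * (X 0*X 1^(0+4)), ?_, by ring⟩
      exact spanC (⟨2, rfl⟩ : (X 0*X 1^(0+4) : MvP) ∈ Set.range _) (-1:ℂ)
  · have hb : b ≤ 1 := by omega
    interval_cases b
    · obtain rfl : c = 1 := by omega
      exact Submodule.mem_sup.mpr ⟨_, memJ4R (X 0^4*X 1^0*X 2^1)
        (X 0*X 2) (X 1*X 2) (-X 2^2 - X 1^2 + (-3)*X 0^2)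
        (by simp only [h1, h2, h3]; ring), 0, Submodule.zero_mem _, by ring⟩
    · obtain rfl : c = 0 := by omega
      refine Submodule.mem_sup.mpr ⟨X 0^4*X 1^1*X 2^0 - (C (1:ℂ) * (X 1^(0+5))), memJ4R _
        (0) ((-4)*X 1^2 + (4)*X 0^2) ((4)*X 1*X 2)
        (by simp only [h1, h2, h3, map_neg, map_one, map_ofNat]; ring),
        C (1:ℂ) * (X 1^(0+5)), ?_, by ring⟩
      exact spanC (⟨1, rfl⟩ : (X 1^(0+5) : MvP) ∈ Set.range _) (1:ℂ)
  · have hb : b ≤ 0 := by omega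
    interval_cases b
    · obtain rfl : c = 0 := by omega
      refine Submodule.mem_sup.mpr ⟨X 0^5*X 1^0*X 2^0 - (C (1:ℂ) * (X 0*X 1^(0+4))), memJ4R _
        ((-4)*X 1^2 + (4)*X 0^2) (0) ((-4)*X 0*X 2)
        (by simp only [h1, h2, h3, map_neg, map_one, map_ofNat]; ring),
        C (1:ℂ) * (X 0*X 1^(0+4)), ?_, by ring⟩
      exact spanC (⟨2, rfl⟩ : (X 0*X 1^(0+4) : MvP) ∈ Set.range _) (1:ℂ)


lemma stepX0 (n : ℕ) {p : MvP}
    (hp : p ∈ (J.restrictScalars ℂ ⊔ Submodule.span ℂ (Set.range (mvI n)))) :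
    X 0 * p ∈ (J.restrictScalars ℂ ⊔ Submodule.span ℂ (Set.range (mvI (n+1)))) := by
  obtain ⟨y, hy, z, hz, rfl⟩ := Submodule.mem_sup.mp hp
  obtain ⟨cc, hcc⟩ := (Submodule.mem_span_range_iff_exists_fun ℂ).mp hz
  have hxy : X 0 * y ∈ J := Ideal.mul_mem_left _ _ hy
  have c1 : (X 0 * X 2^(n+5) : MvP) ∈ J := by
    apply memJ4 _ ((-4)*X 2^(n+3) + (-4)*X 1^2*X 2^(n+1)) (4*X 0*X 1*X 2^(n+1))
      ((-4)*X 0*X 2^(n+2))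
    simp only [h1, h2, h3]; ring
  have c2 : (X 0^2*X 1^(n+4) + X 1^(n+6) : MvP) ∈ J := by
    apply memJ4 _ (2*X 0*X 1^(n+2)) (4*X 1^(n+3) - 2*X 0^2*X 1^(n+1)) ((-4)*X 1^(n+2)*X 2)
    simp only [h1, h2, h3]; ring
  refine Submodule.mem_sup.mpr
    ⟨X 0 * y + C (cc 0) * (X 0 * X 2^(n+5)) + C (cc 2) * (X 0^2*X 1^(n+4) + X 1^(n+6)),
     ?_,
     C (cc 1) * (X 0*X 1^(n+5)) + C (-(cc 2)) * (X 1^(n+6)),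
     ?_, ?_⟩
  · exact Submodule.add_mem _ (Submodule.add_mem _ hxy (Ideal.mul_mem_left _ _ c1))
      (Ideal.mul_mem_left _ _ c2)
  · exact Submodule.add_mem _ (spanC (⟨2, rfl⟩ : (X 0*X 1^(n+5) : MvP) ∈ Set.range _) _)
      (spanC (⟨1, rfl⟩ : (X 1^(n+6) : MvP) ∈ Set.range _) _)
  · rw [← hcc, Fin.sum_univ_three]
    simp only [mvI, Matrix.cons_val_zero, Matrix.cons_val_one, Matrix.head_cons,
      Matrix.cons_val_two, Matrix.tail_cons, smul_eq_C_mul, map_neg]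
    ring

lemma stepX1 (n : ℕ) {p : MvP}
    (hp : p ∈ (J.restrictScalars ℂ ⊔ Submodule.span ℂ (Set.range (mvI n)))) :
    X 1 * p ∈ (J.restrictScalars ℂ ⊔ Submodule.span ℂ (Set.range (mvI (n+1)))) := by
  obtain ⟨y, hy, z, hz, rfl⟩ := Submodule.mem_sup.mp hp
  obtain ⟨cc, hcc⟩ := (Submodule.mem_span_range_iff_exists_fun ℂ).mp hz
  have hxy : X 1 * y ∈ J := Ideal.mul_mem_left _ _ hy
  have c1 : (X 1 * X 2^(n+5) : MvP) ∈ J := by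
    apply memJ4 _ (4*X 0*X 1*X 2^(n+1)) (4*X 2^(n+3) - 4*X 0^2*X 2^(n+1))
      ((-4)*X 1*X 2^(n+2))
    simp only [h1, h2, h3]; ring
  refine Submodule.mem_sup.mpr
    ⟨X 1 * y + C (cc 0) * (X 1 * X 2^(n+5)),
     ?_,
     C (cc 1) * (X 1^(n+6)) + C (cc 2) * (X 0*X 1^(n+5)),
     ?_, ?_⟩
  · exact Submodule.add_mem _ hxy (Ideal.mul_mem_left _ _ c1)
  · exact Submodule.add_mem _ (spanC (⟨1, rfl⟩ : (X 1^(n+6) : MvP) ∈ Set.range _) _)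
      (spanC (⟨2, rfl⟩ : (X 0*X 1^(n+5) : MvP) ∈ Set.range _) _)
  · rw [← hcc, Fin.sum_univ_three]
    simp only [mvI, Matrix.cons_val_zero, Matrix.cons_val_one, Matrix.head_cons,
      Matrix.cons_val_two, Matrix.tail_cons, smul_eq_C_mul, map_neg]
    ring

lemma stepX2 (n : ℕ) {p : MvP}
    (hp : p ∈ (J.restrictScalars ℂ ⊔ Submodule.span ℂ (Set.range (mvI n)))) :
    X 2 * p ∈ (J.restrictScalars ℂ ⊔ Submodule.span ℂ (Set.range (mvI (n+1)))) := by
  obtain ⟨y, hy, z, hz, rfl⟩ := Submodule.mem_sup.mp hp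
  obtain ⟨cc, hcc⟩ := (Submodule.mem_span_range_iff_exists_fun ℂ).mp hz
  have hxy : X 2 * y ∈ J := Ideal.mul_mem_left _ _ hy
  have c1 : (X 1^(n+5) * X 2 : MvP) ∈ J := by
    apply memJ4 _ (X 0*X 1^(n+1)*X 2) (X 1^(n+2)*X 2)
      (-(X 2^2*X 1^(n+1)) + 3*X 1^(n+3) + X 0^2*X 1^(n+1))
    simp only [h1, h2, h3]; ring
  have c2 : (X 0*X 1^(n+4)*X 2 : MvP) ∈ J := by
    apply memJ4 _ (X 1^(n+2)*X 2) (X 0*X 1^(n+1)*X 2) (2*X 0*X 1^(n+2))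
    simp only [h1, h2, h3]; ring
  refine Submodule.mem_sup.mpr
    ⟨X 2 * y + C (cc 1) * (X 1^(n+5) * X 2) + C (cc 2) * (X 0*X 1^(n+4)*X 2),
     ?_,
     C (cc 0) * (X 2^(n+6)),
     ?_, ?_⟩
  · exact Submodule.add_mem _ (Submodule.add_mem _ hxy (Ideal.mul_mem_left _ _ c1))
      (Ideal.mul_mem_left _ _ c2)
  · exact spanC (⟨0, rfl⟩ : (X 2^(n+6) : MvP) ∈ Set.range _) _
  · rw [← hcc, Fin.sum_univ_three]
    simp only [mvI, Matrix.cons_val_zero, Matrix.cons_val_one, Matrix.head_cons,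
      Matrix.cons_val_two, Matrix.tail_cons, smul_eq_C_mul, map_neg]
    ring

lemma mainInd (n : ℕ) : ∀ a b c : ℕ, a + b + c = n + 5 →
    (X 0^a*X 1^b*X 2^c : MvP) ∈
      (J.restrictScalars ℂ ⊔ Submodule.span ℂ (Set.range (mvI n))) := by
  induction n with
  | zero =>
    intro a b c habc
    exact hspan5 a b c (by omega)
  | succ n ih =>
    intro a b c habc
    rcases Nat.eq_zero_or_pos a with ha | ha
    · subst ha
      rcases Nat.eq_zero_or_pos b with hb | hb
      · subst hb
        obtain ⟨c', rfl⟩ : ∃ c', c = c' + 1 := ⟨c - 1, by omega⟩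
        have := stepX2 n (ih 0 0 c' (by omega))
        rw [show (X 0^0*X 1^0*X 2^(c'+1) : MvP) = X 2 * (X 0^0*X 1^0*X 2^c') by ring]
        exact this
      · obtain ⟨b', rfl⟩ : ∃ b', b = b' + 1 := ⟨b - 1, by omega⟩
        have := stepX1 n (ih 0 b' c (by omega))
        rw [show (X 0^0*X 1^(b'+1)*X 2^c : MvP) = X 1 * (X 0^0*X 1^b'*X 2^c) by ring]
        exact this
    · obtain ⟨a', rfl⟩ : ∃ a', a = a' + 1 := ⟨a - 1, by omega⟩
      have := stepX0 n (ih a' b c (by omega))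
      rw [show (X 0^(a'+1)*X 1^b*X 2^c : MvP) = X 0 * (X 0^a'*X 1^b*X 2^c) by ring]
      exact this

lemma dim0 : finrank ℂ (milnorPiece F 0) = 1 :=
  finrank_eq_of_dual (mkFun C0 pts0) mv0 hm0 (ker_low (by norm_num) C0 pts0) dual0
    (fun h hh => span_monomials _ _ hspan0 hh)
lemma dim1 : finrank ℂ (milnorPiece F 1) = 3 :=
  finrank_eq_of_dual (mkFun C1 pts1) mv1 hm1 (ker_low (by norm_num) C1 pts1) dual1
    (fun h hh => span_monomials _ _ hspan1 hh)
lemma dim2 : finrank ℂ (milnorPiece F 2) = 6 :=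
  finrank_eq_of_dual (mkFun C2 pts2) mv2 hm2 (ker_low (by norm_num) C2 pts2) dual2
    (fun h hh => span_monomials _ _ hspan2 hh)
lemma dim3 : finrank ℂ (milnorPiece F 3) = 7 :=
  finrank_eq_of_dual (mkFun C3 pts3) mv3 hm3 ker3 dual3
    (fun h hh => span_monomials _ _ hspan3 hh)
lemma dim4 : finrank ℂ (milnorPiece F 4) = 6 :=
  finrank_eq_of_dual (mkFun C4 pts4) mv4 hm4 ker4 dual4
    (fun h hh => span_monomials _ _ hspan4 hh)
lemma dimI (n : ℕ) : finrank ℂ (milnorPiece F (n+5)) = 3 :=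
  finrank_eq_of_dual (mkFun CI ptsI) (mvI n) (hmI n) (fun p hp _ => kerI p hp) (dualI n)
    (fun h hh => span_monomials _ _ (mainInd n) hh)

end LemnAux
end LemniscateAux

/-- For the Lemniscate of Bernoulli `f = (x²+y²)² - 2(x²-y²)z²`, the graded
pieces of the Milnor algebra have dimensions `1, 3, 6, 7, 6` in degrees `0,…,4`
and dimension `3` in every degree `k ≥ 5`. -/
theorem lemniscate_milnor_dims :
    let f : MvPolynomial (Fin 3) ℂ :=
      (X 0 ^ 2 + X 1 ^ 2) ^ 2 - 2 * (X 0 ^ 2 - X 1 ^ 2) * X 2 ^ 2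
    Module.finrank ℂ (milnorPiece f 0) = 1 ∧
    Module.finrank ℂ (milnorPiece f 1) = 3 ∧
    Module.finrank ℂ (milnorPiece f 2) = 6 ∧
    Module.finrank ℂ (milnorPiece f 3) = 7 ∧
    Module.finrank ℂ (milnorPiece f 4) = 6 ∧
    ∀ k, 5 ≤ k → Module.finrank ℂ (milnorPiece f k) = 3 := by
  intro f
  refine ⟨LemnAux.dim0, LemnAux.dim1, LemnAux.dim2, LemnAux.dim3, LemnAux.dim4, ?_⟩
  intro k hk
  obtain ⟨n, rfl⟩ : ∃ n, k = n + 5 := ⟨k - 5, by omega⟩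
  exact LemnAux.dimI n
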